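/- Let D ⊆ C ⊆ A be finite chains of covering relations in a finite poset A with positive integer bonds on covering relations, where D is a subchain of C consisting of covering relations of A. Then LS_C ∩ ℚ^D = LS_D, where ℚ^D is embedded in ℚ^C as the vectors supported on D. -/

import Mathlib

open scoped BigOperators

/-- Membership in the LS-lattice of a chain `p_0 < … < p_s` with bonds
`b 0, …, b (s-1)` (where `b k` is the bond of the covering `p_{k+1} > p_k`). -/
def memLS (s : ℕ) (b : Fin s → ℕ) (a : Fin (s + 1) → ℚ) : Prop :=
  (∀ k : Fin s, ∃ z : ℤ,
      (b k : ℚ) * (∑ j : Fin (s + 1), if (k : ℕ) + 1 ≤ (j : ℕ) then a j else 0) = z) ∧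
    ∃ z : ℤ, (∑ j : Fin (s + 1), a j) = z

/-- `LS_C ∩ ℚ^D = LS_D` for a subchain `D` of `C` consisting of
consecutive covering relations.  Here `C = {p_0 < … < p_s}` with bonds `b`, and
`D = {p_t, …, p_{t+u}}` (so its bonds are `b t, …, b (t+u-1)`); a vector `a ∈ ℚ^C`
supported on `D` lies in `LS_C` iff the corresponding vector lies in `LS_D`. -/
theorem LS_lattice_subchain (s t u : ℕ) (htu : t + u ≤ s)
    (b : Fin s → ℕ) (hb : ∀ k, 0 < b k)
    (a : Fin (s + 1) → ℚ)
    (hsupp : ∀ j : Fin (s + 1), a j ≠ 0 → t ≤ (j : ℕ) ∧ (j : ℕ) ≤ t + u) :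
    memLS s b a ↔
      memLS u (fun k => b ⟨t + k, by omega⟩)
        (fun k : Fin (u + 1) => a ⟨t + k, by omega⟩) := by
  classical
  -- `F n` : the coefficient `a n`, extended by zero
  set F : ℕ → ℚ := fun n => if h : n < s + 1 then a ⟨n, h⟩ else 0 with hF
  have hFsupp : ∀ n, F n ≠ 0 → t ≤ n ∧ n ≤ t + u := by
    intro n hn
    simp only [hF] at hn
    split at hn
    · exact hsupp _ hn
    · exact absurd rfl hn
  -- windowed tail sum
  set G : ℕ → ℚ := fun r => ∑ n ∈ Finset.Ico r (t + u + 1), F n with hG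
  -- tail sums of `C` are windowed tail sums
  have key : ∀ m, m ≤ s + 1 →
      (∑ j : Fin (s + 1), if m ≤ (j : ℕ) then a j else 0) = G (max m t) := by
    intro m hm
    have h1 : (∑ j : Fin (s + 1), if m ≤ (j : ℕ) then a j else 0)
        = ∑ n ∈ Finset.range (s + 1), (if m ≤ n then F n else 0) := by
      rw [Finset.sum_range]
      apply Finset.sum_congr rfl
      intro j _
      simp [hF, j.isLt, Nat.le_of_lt_succ j.isLt]
    have h2 : (∑ n ∈ Finset.range (s + 1), (if m ≤ n then F n else 0))
        = ∑ n ∈ Finset.Ico m (s + 1), F n := by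
      rw [← Finset.sum_filter]
      congr 1
      ext n
      simp only [Finset.mem_filter, Finset.mem_range, Finset.mem_Ico]
      omega
    rw [h1, h2, hG]
    have hsub : Finset.Ico (max m t) (t + u + 1) ⊆ Finset.Ico m (s + 1) := by
      intro n hn
      simp only [Finset.mem_Ico] at hn ⊢
      omega
    refine (Finset.sum_subset hsub ?_).symm
    intro n hn hns
    by_contra h
    obtain ⟨h1', h2'⟩ := hFsupp n h
    simp only [Finset.mem_Ico] at hn hns
    omega
  -- tail sums of `D` are windowed tail sums
  have key' : ∀ m, m ≤ u + 1 →
      (∑ j : Fin (u + 1), if m ≤ (j : ℕ) then a ⟨t + j, by omega⟩ else 0)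
        = G (t + m) := by
    intro m hm
    have h1 : (∑ j : Fin (u + 1), if m ≤ (j : ℕ) then a ⟨t + j, by omega⟩ else 0)
        = ∑ n ∈ Finset.range (u + 1), (if m ≤ n then F (t + n) else 0) := by
      rw [Finset.sum_range]
      apply Finset.sum_congr rfl
      intro j _
      have hj : t + (j : ℕ) < s + 1 := by omega
      simp [hF, hj, Nat.le_of_lt_succ hj]
    have h2 : (∑ n ∈ Finset.range (u + 1), (if m ≤ n then F (t + n) else 0))
        = ∑ n ∈ Finset.Ico m (u + 1), F (t + n) := by
      rw [← Finset.sum_filter]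
      congr 1
      ext n
      simp only [Finset.mem_filter, Finset.mem_range, Finset.mem_Ico]
      omega
    rw [h1, h2]
    show _ = ∑ n ∈ Finset.Ico (t + m) (t + u + 1), F n
    rw [Finset.sum_Ico_eq_sum_range, Finset.sum_Ico_eq_sum_range]
    have : t + u + 1 - (t + m) = u + 1 - m := by omega
    rw [this]
    apply Finset.sum_congr rfl
    intro i _
    ring_nf
  -- totals
  have totC : (∑ j : Fin (s + 1), a j) = G t := by
    have := key 0 (by omega)
    simpa using this
  have totD : (∑ j : Fin (u + 1), a ⟨t + j, by omega⟩) = G t := by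
    have := key' 0 (by omega)
    simpa using this
  have hGzero : ∀ r, t + u + 1 ≤ r → G r = 0 := by
    intro r hr
    rw [hG]
    simp only
    rw [Finset.Ico_eq_empty (by omega), Finset.sum_empty]
  constructor
  · rintro ⟨h1, h2⟩
    constructor
    · intro k
      obtain ⟨z, hz⟩ := h1 ⟨t + k, by omega⟩
      refine ⟨z, ?_⟩
      rw [key' ((k : ℕ) + 1) (by omega)]
      rw [key (t + (k : ℕ) + 1) (by omega)] at hz
      rw [max_eq_left (by omega)] at hz
      have : t + ((k : ℕ) + 1) = t + (k : ℕ) + 1 := by omega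
      rw [this]
      exact hz
    · obtain ⟨z, hz⟩ := h2
      exact ⟨z, by rw [totD, ← totC]; exact hz⟩
  · rintro ⟨h1, h2⟩
    obtain ⟨T, hT⟩ := h2
    rw [totD] at hT
    constructor
    · intro k
      rcases lt_trichotomy ((k : ℕ) + 1) (t + 1) with hk | hk | hk
      · -- k + 1 ≤ t : tail is the total sum
        refine ⟨(b k : ℤ) * T, ?_⟩
        rw [key ((k : ℕ) + 1) (by omega), max_eq_right (by omega), hT]
        push_cast
        ring
      · -- k + 1 = t + 1, i.e. k = t : first bond of D
        have hku : (0 : ℕ) < u ∨ u = 0 := by omega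
        rcases Nat.eq_zero_or_pos u with hu | hu
        · -- u = 0 : tail is zero
          refine ⟨0, ?_⟩
          rw [key ((k : ℕ) + 1) (by omega), max_eq_left (by omega),
            hGzero _ (by omega)]
          simp
        · obtain ⟨z, hz⟩ := h1 ⟨0, hu⟩
          simp only at hz
          refine ⟨z, ?_⟩
          rw [key' 1 (by omega)] at hz
          rw [key ((k : ℕ) + 1) (by omega), max_eq_left (by omega)]
          have hbk : b ⟨t + (0 : ℕ), by omega⟩ = b k := by
            congr 1
            ext
            simp
            omega
          rw [hbk] at hz
          have : (k : ℕ) + 1 = t + 1 := by omega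
          rw [this]
          exact hz
      · rcases lt_or_ge (k : ℕ) (t + u) with hk2 | hk2
        · -- t < k < t + u : interior bond of D
          have hku : (k : ℕ) - t < u := by omega
          obtain ⟨z, hz⟩ := h1 ⟨(k : ℕ) - t, hku⟩
          simp only at hz
          refine ⟨z, ?_⟩
          rw [key' ((k : ℕ) - t + 1) (by omega)] at hz
          rw [key ((k : ℕ) + 1) (by omega), max_eq_left (by omega)]
          have hbk : b ⟨t + ((k : ℕ) - t), by omega⟩ = b k := by
            congr 1
            ext
            simp
            omega
          rw [hbk] at hz
          have : t + ((k : ℕ) - t + 1) = (k : ℕ) + 1 := by omega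
          rw [this] at hz
          exact hz
        · -- k ≥ t + u : tail is zero
          refine ⟨0, ?_⟩
          rw [key ((k : ℕ) + 1) (by omega), max_eq_left (by omega),
            hGzero _ (by omega)]
          simp
    · exact ⟨T, by rw [totC]; exact hT⟩
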